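/- For every integer n ≥ 2 and every real data array (f_{r,s}) with r,s ∈ {−n,…,n}, the function R(B₀,…,B₅) = ∑_{r=-n}^{n} ∑_{s=-n}^{n} (f_{r,s} − B₀ − B₁r − B₂s − B₃r² − B₄rs − B₅s²)² attains its unique global minimum over ℝ⁶ at the point defined by B₅ = ∑_r ∑_s [−15(n² + n − 3s²)/(n(n+1)(2n−1)(2n+1)²(2n+3))] f_{r,s}, B₄ = ∑_r ∑_s [9rs/(n²(n+1)²(2n+1)²)] f_{r,s}, B₃ = ∑_r ∑_s [−15(n² + n − 3r²)/(n(n+1)(2n−1)(2n+1)²(2n+3))] f_{r,s}, B₂ = ∑_r ∑_s [3s/(n(n+1)(2n+1)²)] f_{r,s}, B₁ = ∑_r ∑_s [3r/(n(n+1)(2n+1)²)] f_{r,s}, and B₀ = (1/(2n+1)²) ∑_r ∑_s f_{r,s} − (n(n+1)/3)B₃ − (n(n+1)/3)B₅. (Proposition 4.3) -/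

import Mathlib

lemma icc_step (n : ℤ) (hn : 0 ≤ n) (g : ℤ → ℝ) :
    ∑ r ∈ Finset.Icc (-(n+1)) (n+1), g r
      = g (-(n+1)) + (∑ r ∈ Finset.Icc (-n) n, g r) + g (n+1) := by
  have h : Finset.Icc (-(n+1)) (n+1) = insert (-(n+1)) (insert (n+1) (Finset.Icc (-n) n)) := by
    ext x; simp only [Finset.mem_Icc, Finset.mem_insert]; omega
  have h1 : (n+1) ∉ Finset.Icc (-n) n := by simp only [Finset.mem_Icc]; omega
  have h2 : -(n+1) ∉ insert (n+1) (Finset.Icc (-n) n) := by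
    simp only [Finset.mem_insert, Finset.mem_Icc]; omega
  rw [h, Finset.sum_insert h2, Finset.sum_insert h1]; ring

lemma moments : ∀ n : ℤ, 0 ≤ n →
    (((∑ r ∈ Finset.Icc (-n) n, (1:ℝ)) = 2*(n:ℝ)+1 ∧
    (∑ r ∈ Finset.Icc (-n) n, (r:ℝ)) = 0 ∧
    (∑ r ∈ Finset.Icc (-n) n, (r:ℝ)^2) = (n:ℝ)*((n:ℝ)+1)*(2*(n:ℝ)+1)/3 ∧
    (∑ r ∈ Finset.Icc (-n) n, (r:ℝ)^3) = 0 ∧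
    (∑ r ∈ Finset.Icc (-n) n, (r:ℝ)^4)
      = (n:ℝ)*((n:ℝ)+1)*(2*(n:ℝ)+1)*(3*(n:ℝ)^2+3*(n:ℝ)-1)/15)) := by
  refine Int.le_induction ?_ ?_
  · norm_num
  · intro n hn ih
    obtain ⟨i0, i1, i2, i3, i4⟩ := ih
    refine ⟨?_, ?_, ?_, ?_, ?_⟩
    · rw [icc_step n hn]; rw [i0]; push_cast; ring
    · rw [icc_step n hn]; rw [i1]; push_cast; ring
    · rw [icc_step n hn]; rw [i2]; push_cast; ring
    · rw [icc_step n hn]; rw [i3]; push_cast; ring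
    · rw [icc_step n hn]; rw [i4]; push_cast; ring

lemma pure_sum (I : Finset ℤ) (u v : ℕ) (c : ℝ) :
    ∑ r ∈ I, ∑ s ∈ I, c * ((r:ℝ)^u * (s:ℝ)^v)
      = c * (∑ r ∈ I, (r:ℝ)^u) * (∑ s ∈ I, (s:ℝ)^v) := by
  rw [mul_assoc, Finset.sum_mul_sum, Finset.mul_sum]
  refine Finset.sum_congr rfl fun r _ => ?_
  rw [Finset.mul_sum]

lemma expand_sum (I : Finset ℤ) (f : ℤ → ℤ → ℝ) (c0 c1 c2 c3 c4 c5 : ℝ) (a b : ℕ) :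
    ∑ r ∈ I, ∑ s ∈ I,
      ((f r s - c0 - c1*(r:ℝ) - c2*(s:ℝ) - c3*(r:ℝ)^2 - c4*(r:ℝ)*(s:ℝ) - c5*(s:ℝ)^2)
        * ((r:ℝ)^a * (s:ℝ)^b))
    = (∑ r ∈ I, ∑ s ∈ I, (r:ℝ)^a * (s:ℝ)^b * f r s)
      - c0 * (∑ r ∈ I, (r:ℝ)^a) * (∑ s ∈ I, (s:ℝ)^b)
      - c1 * (∑ r ∈ I, (r:ℝ)^(a+1)) * (∑ s ∈ I, (s:ℝ)^b)
      - c2 * (∑ r ∈ I, (r:ℝ)^a) * (∑ s ∈ I, (s:ℝ)^(b+1))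
      - c3 * (∑ r ∈ I, (r:ℝ)^(a+2)) * (∑ s ∈ I, (s:ℝ)^b)
      - c4 * (∑ r ∈ I, (r:ℝ)^(a+1)) * (∑ s ∈ I, (s:ℝ)^(b+1))
      - c5 * (∑ r ∈ I, (r:ℝ)^a) * (∑ s ∈ I, (s:ℝ)^(b+2)) := by
  rw [← pure_sum I a b c0, ← pure_sum I (a+1) b c1, ← pure_sum I a (b+1) c2,
    ← pure_sum I (a+2) b c3, ← pure_sum I (a+1) (b+1) c4, ← pure_sum I a (b+2) c5]
  simp only [← Finset.sum_sub_distrib]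
  refine Finset.sum_congr rfl fun r _ => Finset.sum_congr rfl fun s _ => ?_
  ring

set_option maxHeartbeats 1600000 in
theorem stmt_4 (n : ℤ) (hn : 2 ≤ n) (f : ℤ → ℤ → ℝ)
    (B0 B1 B2 B3 B4 B5 : ℝ)
    (hB5 : B5 = ∑ r ∈ Finset.Icc (-n) n, ∑ s ∈ Finset.Icc (-n) n,
      (-15) * ((n : ℝ) ^ 2 + (n : ℝ) - 3 * (s : ℝ) ^ 2) /
        ((n : ℝ) * ((n : ℝ) + 1) * (2 * (n : ℝ) - 1) * (2 * (n : ℝ) + 1) ^ 2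
          * (2 * (n : ℝ) + 3)) * f r s)
    (hB4 : B4 = ∑ r ∈ Finset.Icc (-n) n, ∑ s ∈ Finset.Icc (-n) n,
      9 * (r : ℝ) * (s : ℝ) /
        ((n : ℝ) ^ 2 * ((n : ℝ) + 1) ^ 2 * (2 * (n : ℝ) + 1) ^ 2) * f r s)
    (hB3 : B3 = ∑ r ∈ Finset.Icc (-n) n, ∑ s ∈ Finset.Icc (-n) n,
      (-15) * ((n : ℝ) ^ 2 + (n : ℝ) - 3 * (r : ℝ) ^ 2) /
        ((n : ℝ) * ((n : ℝ) + 1) * (2 * (n : ℝ) - 1) * (2 * (n : ℝ) + 1) ^ 2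
          * (2 * (n : ℝ) + 3)) * f r s)
    (hB2 : B2 = ∑ r ∈ Finset.Icc (-n) n, ∑ s ∈ Finset.Icc (-n) n,
      3 * (s : ℝ) / ((n : ℝ) * ((n : ℝ) + 1) * (2 * (n : ℝ) + 1) ^ 2) * f r s)
    (hB1 : B1 = ∑ r ∈ Finset.Icc (-n) n, ∑ s ∈ Finset.Icc (-n) n,
      3 * (r : ℝ) / ((n : ℝ) * ((n : ℝ) + 1) * (2 * (n : ℝ) + 1) ^ 2) * f r s)
    (hB0 : B0 = (1 / (2 * (n : ℝ) + 1) ^ 2) *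
        (∑ r ∈ Finset.Icc (-n) n, ∑ s ∈ Finset.Icc (-n) n, f r s)
      - (n : ℝ) * ((n : ℝ) + 1) / 3 * B3 - (n : ℝ) * ((n : ℝ) + 1) / 3 * B5) :
    ∀ b0 b1 b2 b3 b4 b5 : ℝ, (b0, b1, b2, b3, b4, b5) ≠ (B0, B1, B2, B3, B4, B5) →
      (∑ r ∈ Finset.Icc (-n) n, ∑ s ∈ Finset.Icc (-n) n,
        (f r s - B0 - B1 * (r : ℝ) - B2 * (s : ℝ) - B3 * (r : ℝ) ^ 2
          - B4 * (r : ℝ) * (s : ℝ) - B5 * (s : ℝ) ^ 2) ^ 2) <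
      (∑ r ∈ Finset.Icc (-n) n, ∑ s ∈ Finset.Icc (-n) n,
        (f r s - b0 - b1 * (r : ℝ) - b2 * (s : ℝ) - b3 * (r : ℝ) ^ 2
          - b4 * (r : ℝ) * (s : ℝ) - b5 * (s : ℝ) ^ 2) ^ 2) := by
  intro b0 b1 b2 b3 b4 b5 hne
  set I := Finset.Icc (-n) n with hI
  have hn0 : (0:ℤ) ≤ n := by omega
  obtain ⟨m0, m1, m2, m3, m4⟩ := moments n hn0
  rw [← hI] at m0 m1 m2 m3 m4
  simp only [Finset.sum_const, nsmul_eq_mul, mul_one] at m0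
  have hnR : (2:ℝ) ≤ (n:ℝ) := by exact_mod_cast hn
  have p1 : (0:ℝ) < (n:ℝ) := by linarith
  have p2 : (0:ℝ) < (n:ℝ)+1 := by linarith
  have p3 : (0:ℝ) < 2*(n:ℝ)-1 := by linarith
  have p4 : (0:ℝ) < 2*(n:ℝ)+1 := by linarith
  have p5 : (0:ℝ) < 2*(n:ℝ)+3 := by linarith
  have q1 : ((n:ℝ)) ≠ 0 := ne_of_gt p1
  have q2 : ((n:ℝ)+1) ≠ 0 := ne_of_gt p2
  have q3 : (2*(n:ℝ)-1) ≠ 0 := ne_of_gt p3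
  have q4 : (2*(n:ℝ)+1) ≠ 0 := ne_of_gt p4
  have q5 : (2*(n:ℝ)+3) ≠ 0 := ne_of_gt p5
  set S00 := ∑ r ∈ I, ∑ s ∈ I, f r s with hS00
  set S10 := ∑ r ∈ I, ∑ s ∈ I, (r:ℝ) * f r s with hS10
  set S01 := ∑ r ∈ I, ∑ s ∈ I, (s:ℝ) * f r s with hS01
  set S20 := ∑ r ∈ I, ∑ s ∈ I, (r:ℝ)^2 * f r s with hS20
  set S11 := ∑ r ∈ I, ∑ s ∈ I, (r:ℝ) * (s:ℝ) * f r s with hS11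
  set S02 := ∑ r ∈ I, ∑ s ∈ I, (s:ℝ)^2 * f r s with hS02
  -- rewrite coefficient formulas in terms of the S's
  have hB5' : B5 = (-15)*((n:ℝ)^2+(n:ℝ)) /
      ((n:ℝ)*((n:ℝ)+1)*(2*(n:ℝ)-1)*(2*(n:ℝ)+1)^2*(2*(n:ℝ)+3)) * S00
      + 45 / ((n:ℝ)*((n:ℝ)+1)*(2*(n:ℝ)-1)*(2*(n:ℝ)+1)^2*(2*(n:ℝ)+3)) * S02 := by
    rw [hB5, hS00, hS02, Finset.mul_sum, Finset.mul_sum, ← Finset.sum_add_distrib]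
    refine Finset.sum_congr rfl fun r _ => ?_
    rw [Finset.mul_sum, Finset.mul_sum, ← Finset.sum_add_distrib]
    refine Finset.sum_congr rfl fun s _ => ?_
    ring
  have hB3' : B3 = (-15)*((n:ℝ)^2+(n:ℝ)) /
      ((n:ℝ)*((n:ℝ)+1)*(2*(n:ℝ)-1)*(2*(n:ℝ)+1)^2*(2*(n:ℝ)+3)) * S00
      + 45 / ((n:ℝ)*((n:ℝ)+1)*(2*(n:ℝ)-1)*(2*(n:ℝ)+1)^2*(2*(n:ℝ)+3)) * S20 := by
    rw [hB3, hS00, hS20, Finset.mul_sum, Finset.mul_sum, ← Finset.sum_add_distrib]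
    refine Finset.sum_congr rfl fun r _ => ?_
    rw [Finset.mul_sum, Finset.mul_sum, ← Finset.sum_add_distrib]
    refine Finset.sum_congr rfl fun s _ => ?_
    ring
  have hB4' : B4 = 9 / ((n:ℝ)^2*((n:ℝ)+1)^2*(2*(n:ℝ)+1)^2) * S11 := by
    rw [hB4, hS11, Finset.mul_sum]
    refine Finset.sum_congr rfl fun r _ => ?_
    rw [Finset.mul_sum]
    refine Finset.sum_congr rfl fun s _ => ?_
    ring
  have hB1' : B1 = 3 / ((n:ℝ)*((n:ℝ)+1)*(2*(n:ℝ)+1)^2) * S10 := by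
    rw [hB1, hS10, Finset.mul_sum]
    refine Finset.sum_congr rfl fun r _ => ?_
    rw [Finset.mul_sum]
    refine Finset.sum_congr rfl fun s _ => ?_
    ring
  have hB2' : B2 = 3 / ((n:ℝ)*((n:ℝ)+1)*(2*(n:ℝ)+1)^2) * S01 := by
    rw [hB2, hS01, Finset.mul_sum]
    refine Finset.sum_congr rfl fun r _ => ?_
    rw [Finset.mul_sum]
    refine Finset.sum_congr rfl fun s _ => ?_
    ring
  -- normal equations
  have N00 : ∑ r ∈ I, ∑ s ∈ I,
      ((f r s - B0 - B1*(r:ℝ) - B2*(s:ℝ) - B3*(r:ℝ)^2 - B4*(r:ℝ)*(s:ℝ) - B5*(s:ℝ)^2)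
        * ((r:ℝ)^(0:ℕ) * (s:ℝ)^(0:ℕ))) = 0 := by
    rw [expand_sum]
    norm_num [m0, m1, m2]
    rw [← hS00, hB0, hB3', hB5']
    field_simp
    ring
  have N10 : ∑ r ∈ I, ∑ s ∈ I,
      ((f r s - B0 - B1*(r:ℝ) - B2*(s:ℝ) - B3*(r:ℝ)^2 - B4*(r:ℝ)*(s:ℝ) - B5*(s:ℝ)^2)
        * ((r:ℝ)^(1:ℕ) * (s:ℝ)^(0:ℕ))) = 0 := by
    rw [expand_sum]
    norm_num [m0, m1, m2, m3]
    rw [← hS10, hB1']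
    field_simp
    ring
  have N01 : ∑ r ∈ I, ∑ s ∈ I,
      ((f r s - B0 - B1*(r:ℝ) - B2*(s:ℝ) - B3*(r:ℝ)^2 - B4*(r:ℝ)*(s:ℝ) - B5*(s:ℝ)^2)
        * ((r:ℝ)^(0:ℕ) * (s:ℝ)^(1:ℕ))) = 0 := by
    rw [expand_sum]
    norm_num [m0, m1, m2, m3]
    rw [← hS01, hB2']
    field_simp
    ring
  have N20 : ∑ r ∈ I, ∑ s ∈ I,
      ((f r s - B0 - B1*(r:ℝ) - B2*(s:ℝ) - B3*(r:ℝ)^2 - B4*(r:ℝ)*(s:ℝ) - B5*(s:ℝ)^2)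
        * ((r:ℝ)^(2:ℕ) * (s:ℝ)^(0:ℕ))) = 0 := by
    rw [expand_sum]
    norm_num [m0, m1, m2, m3, m4]
    rw [← hS20, hB0, hB3', hB5']
    field_simp
    ring
  have N11 : ∑ r ∈ I, ∑ s ∈ I,
      ((f r s - B0 - B1*(r:ℝ) - B2*(s:ℝ) - B3*(r:ℝ)^2 - B4*(r:ℝ)*(s:ℝ) - B5*(s:ℝ)^2)
        * ((r:ℝ)^(1:ℕ) * (s:ℝ)^(1:ℕ))) = 0 := by
    rw [expand_sum]
    norm_num [m0, m1, m2, m3]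
    rw [← hS11, hB4']
    field_simp
    ring
  have N02 : ∑ r ∈ I, ∑ s ∈ I,
      ((f r s - B0 - B1*(r:ℝ) - B2*(s:ℝ) - B3*(r:ℝ)^2 - B4*(r:ℝ)*(s:ℝ) - B5*(s:ℝ)^2)
        * ((r:ℝ)^(0:ℕ) * (s:ℝ)^(2:ℕ))) = 0 := by
    rw [expand_sum]
    norm_num [m0, m1, m2, m3, m4]
    rw [← hS02, hB0, hB3', hB5']
    field_simp
    ring
  -- decomposition
  have point : ∀ r s : ℤ,
      (f r s - b0 - b1*(r:ℝ) - b2*(s:ℝ) - b3*(r:ℝ)^2 - b4*(r:ℝ)*(s:ℝ) - b5*(s:ℝ)^2)^2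
      = (f r s - B0 - B1*(r:ℝ) - B2*(s:ℝ) - B3*(r:ℝ)^2 - B4*(r:ℝ)*(s:ℝ) - B5*(s:ℝ)^2)^2
        + ((B0-b0) + (B1-b1)*(r:ℝ) + (B2-b2)*(s:ℝ) + (B3-b3)*(r:ℝ)^2
          + (B4-b4)*(r:ℝ)*(s:ℝ) + (B5-b5)*(s:ℝ)^2)^2
        + (2*(B0-b0)) * ((f r s - B0 - B1*(r:ℝ) - B2*(s:ℝ) - B3*(r:ℝ)^2 - B4*(r:ℝ)*(s:ℝ)
            - B5*(s:ℝ)^2) * ((r:ℝ)^(0:ℕ) * (s:ℝ)^(0:ℕ)))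
        + (2*(B1-b1)) * ((f r s - B0 - B1*(r:ℝ) - B2*(s:ℝ) - B3*(r:ℝ)^2 - B4*(r:ℝ)*(s:ℝ)
            - B5*(s:ℝ)^2) * ((r:ℝ)^(1:ℕ) * (s:ℝ)^(0:ℕ)))
        + (2*(B2-b2)) * ((f r s - B0 - B1*(r:ℝ) - B2*(s:ℝ) - B3*(r:ℝ)^2 - B4*(r:ℝ)*(s:ℝ)
            - B5*(s:ℝ)^2) * ((r:ℝ)^(0:ℕ) * (s:ℝ)^(1:ℕ)))
        + (2*(B3-b3)) * ((f r s - B0 - B1*(r:ℝ) - B2*(s:ℝ) - B3*(r:ℝ)^2 - B4*(r:ℝ)*(s:ℝ)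
            - B5*(s:ℝ)^2) * ((r:ℝ)^(2:ℕ) * (s:ℝ)^(0:ℕ)))
        + (2*(B4-b4)) * ((f r s - B0 - B1*(r:ℝ) - B2*(s:ℝ) - B3*(r:ℝ)^2 - B4*(r:ℝ)*(s:ℝ)
            - B5*(s:ℝ)^2) * ((r:ℝ)^(1:ℕ) * (s:ℝ)^(1:ℕ)))
        + (2*(B5-b5)) * ((f r s - B0 - B1*(r:ℝ) - B2*(s:ℝ) - B3*(r:ℝ)^2 - B4*(r:ℝ)*(s:ℝ)
            - B5*(s:ℝ)^2) * ((r:ℝ)^(0:ℕ) * (s:ℝ)^(2:ℕ))) := by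
    intro r s; ring
  have key : (∑ r ∈ I, ∑ s ∈ I,
        (f r s - b0 - b1*(r:ℝ) - b2*(s:ℝ) - b3*(r:ℝ)^2 - b4*(r:ℝ)*(s:ℝ) - b5*(s:ℝ)^2)^2)
      = (∑ r ∈ I, ∑ s ∈ I,
        (f r s - B0 - B1*(r:ℝ) - B2*(s:ℝ) - B3*(r:ℝ)^2 - B4*(r:ℝ)*(s:ℝ) - B5*(s:ℝ)^2)^2)
      + (∑ r ∈ I, ∑ s ∈ I,
        ((B0-b0) + (B1-b1)*(r:ℝ) + (B2-b2)*(s:ℝ) + (B3-b3)*(r:ℝ)^2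
          + (B4-b4)*(r:ℝ)*(s:ℝ) + (B5-b5)*(s:ℝ)^2)^2) := by
    rw [Finset.sum_congr rfl fun r _ => Finset.sum_congr rfl fun s _ => point r s]
    simp only [Finset.sum_add_distrib, ← Finset.mul_sum]
    rw [N00, N10, N01, N20, N11, N02]
    ring
  have hDpos : 0 < ∑ r ∈ I, ∑ s ∈ I,
      ((B0-b0) + (B1-b1)*(r:ℝ) + (B2-b2)*(s:ℝ) + (B3-b3)*(r:ℝ)^2
        + (B4-b4)*(r:ℝ)*(s:ℝ) + (B5-b5)*(s:ℝ)^2)^2 := by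
    have hnn : (0:ℝ) ≤ ∑ r ∈ I, ∑ s ∈ I,
        ((B0-b0) + (B1-b1)*(r:ℝ) + (B2-b2)*(s:ℝ) + (B3-b3)*(r:ℝ)^2
          + (B4-b4)*(r:ℝ)*(s:ℝ) + (B5-b5)*(s:ℝ)^2)^2 :=
      Finset.sum_nonneg fun r _ => Finset.sum_nonneg fun s _ => sq_nonneg _
    rcases hnn.lt_or_eq with h | h
    · exact h
    · exfalso
      have hz : ∀ r ∈ I, ∀ s ∈ I,
          (B0-b0) + (B1-b1)*(r:ℝ) + (B2-b2)*(s:ℝ) + (B3-b3)*(r:ℝ)^2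
            + (B4-b4)*(r:ℝ)*(s:ℝ) + (B5-b5)*(s:ℝ)^2 = 0 := by
        intro r hr s hs
        have h0 := (Finset.sum_eq_zero_iff_of_nonneg
          (fun r _ => Finset.sum_nonneg fun s _ => sq_nonneg _)).1 h.symm r hr
        have h1 := (Finset.sum_eq_zero_iff_of_nonneg (fun s _ => sq_nonneg _)).1 h0 s hs
        exact pow_eq_zero_iff two_ne_zero |>.1 h1
      have mem : ∀ k : ℤ, -2 ≤ k → k ≤ 2 → k ∈ I := by
        intro k h1 h2; rw [hI, Finset.mem_Icc]; omega
      have e00 := hz 0 (mem 0 (by norm_num) (by norm_num)) 0 (mem 0 (by norm_num) (by norm_num))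
      have e10 := hz 1 (mem 1 (by norm_num) (by norm_num)) 0 (mem 0 (by norm_num) (by norm_num))
      have em10 := hz (-1) (mem (-1) (by norm_num) (by norm_num)) 0 (mem 0 (by norm_num) (by norm_num))
      have e01 := hz 0 (mem 0 (by norm_num) (by norm_num)) 1 (mem 1 (by norm_num) (by norm_num))
      have em01 := hz 0 (mem 0 (by norm_num) (by norm_num)) (-1) (mem (-1) (by norm_num) (by norm_num))
      have e11 := hz 1 (mem 1 (by norm_num) (by norm_num)) 1 (mem 1 (by norm_num) (by norm_num))
      push_cast at e00 e10 em10 e01 em01 e11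
      apply hne
      simp only [Prod.mk.injEq]
      refine ⟨by linarith, by linarith, by linarith, by linarith, by linarith, by linarith⟩
  rw [key]
  linarith
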